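/- For n ≥ 1 and 1 ≤ a ≤ n, let δ_{a,n} = n + n·√(1 + 4/(an)) (which equals twice the value of the periodic continued fraction [n; a,n,a,n,…]). Then the union over all n ≥ 1 and 1 ≤ a ≤ n of the intervals [δ_{a,n}, δ_{a,n}+1] equals [1+√5, 2+√5] ∪ [2+2√2, 3+2√3] ∪ [3+√13, ∞). In particular 0 ≤ δ_{a,n} − δ_{a+1,n} ≤ 1 for n ≥ 2, 1 ≤ a < n, and |δ_{n+1,n+1} − δ_{1,n}| < 1 for n ≥ 3. -/

import Mathlib

open Set

/-- `δ_{a,n} = n + n·√(1 + 4/(an))`, twice the value of `[n; a, n, a, n, …]`. -/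
noncomputable def delta (a n : ℕ) : ℝ :=
  (n : ℝ) + (n : ℝ) * Real.sqrt (1 + 4 / ((a : ℝ) * (n : ℝ)))

lemma my_sqrt_le {x c : ℝ} (hc : 0 ≤ c) (h : x ≤ c^2) : Real.sqrt x ≤ c := by
  calc Real.sqrt x ≤ Real.sqrt (c^2) := Real.sqrt_le_sqrt h
  _ = c := Real.sqrt_sq hc

lemma my_le_sqrt {x c : ℝ} (hc : 0 ≤ c) (h : c^2 ≤ x) : c ≤ Real.sqrt x := by
  calc c = Real.sqrt (c^2) := (Real.sqrt_sq hc).symm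
  _ ≤ _ := Real.sqrt_le_sqrt h

lemma delta_eq (a n : ℕ) (ha : 1 ≤ a) (hn : 1 ≤ n) :
    delta a n = n + Real.sqrt ((n:ℝ)^2 + 4*n/a) := by
  have ha' : (0:ℝ) < a := by exact_mod_cast ha
  have hn' : (0:ℝ) < n := by exact_mod_cast hn
  unfold delta
  rw [show ((n:ℝ)^2 + 4*n/a) = (n:ℝ)^2 * (1 + 4/((a:ℝ)*n)) by field_simp]
  rw [Real.sqrt_mul (sq_nonneg _), Real.sqrt_sq hn'.le]

lemma delta_anti {a b : ℕ} (n : ℕ) (ha : 1 ≤ a) (hab : a ≤ b) (hn : 1 ≤ n) :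
    delta b n ≤ delta a n := by
  have ha' : (0:ℝ) < a := by exact_mod_cast ha
  have hab' : (a:ℝ) ≤ b := by exact_mod_cast hab
  rw [delta_eq a n ha hn, delta_eq b n (le_trans ha hab) hn]
  gcongr

lemma delta_gap (a n : ℕ) (ha : 1 ≤ a) (hn : 1 ≤ n) :
    delta a n ≤ delta (a+1) n + 1 := by
  have ha' : (1:ℝ) ≤ a := by exact_mod_cast ha
  have hn' : (1:ℝ) ≤ n := by exact_mod_cast hn
  rw [delta_eq a n ha hn, delta_eq (a+1) n (by omega) hn]
  push_cast
  set s := Real.sqrt ((n:ℝ)^2 + 4*n/((a:ℝ)+1)) with hs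
  have hs0 : 0 ≤ s := Real.sqrt_nonneg _
  have hsn : (n:ℝ) ≤ s := my_le_sqrt (by linarith) (by
    have : 0 ≤ 4*(n:ℝ)/((a:ℝ)+1) := by positivity
    linarith)
  have hsq : s^2 = (n:ℝ)^2 + 4*n/((a:ℝ)+1) := Real.sq_sqrt (by positivity)
  have key : Real.sqrt ((n:ℝ)^2 + 4*n/(a:ℝ)) ≤ s + 1 := by
    apply my_sqrt_le (by linarith)
    have h1 : 4*(n:ℝ)/(a:ℝ) - 4*n/((a:ℝ)+1) ≤ 2*n := by
      rw [div_sub_div _ _ (by linarith) (by linarith), div_le_iff₀ (by nlinarith)]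
      nlinarith [mul_nonneg (mul_nonneg (by linarith : (0:ℝ) ≤ 2*(n:ℝ)) (by linarith : (0:ℝ) ≤ (a:ℝ)-1)) (by linarith : (0:ℝ) ≤ (a:ℝ)+2)]
    nlinarith [hsq, hsn]
  linarith

lemma delta_ge (a n : ℕ) : (n:ℝ) ≤ delta a n := by
  unfold delta
  have : 0 ≤ (n:ℝ) * Real.sqrt (1 + 4 / ((a:ℝ)*n)) := by positivity
  linarith

lemma delta_nn (n : ℕ) (hn : 1 ≤ n) : delta n n = n + Real.sqrt ((n:ℝ)^2 + 4) := by
  rw [delta_eq n n hn hn]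
  have hn' : (0:ℝ) < n := by exact_mod_cast hn
  rw [mul_div_assoc, div_self hn'.ne']
  norm_num

lemma delta33 : delta 3 3 = 3 + Real.sqrt 13 := by
  rw [delta_nn 3 (by norm_num)]; push_cast; norm_num

lemma delta11 : delta 1 1 = 1 + Real.sqrt 5 := by
  rw [delta_eq 1 1 le_rfl le_rfl]; norm_num

lemma delta22 : delta 2 2 = 2 + 2 * Real.sqrt 2 := by
  rw [delta_nn 2 (by norm_num)]
  push_cast
  rw [show ((2:ℝ)^2 + 4) = 2^2 * 2 by norm_num, Real.sqrt_mul (by positivity),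
    Real.sqrt_sq (by norm_num)]

lemma delta12 : delta 1 2 = 2 + 2 * Real.sqrt 3 := by
  rw [delta_eq 1 2 le_rfl (by norm_num)]
  norm_num
  rw [show (12:ℝ) = 2^2 * 3 by norm_num, Real.sqrt_mul (by positivity),
    Real.sqrt_sq (by norm_num)]

lemma glue_up (n : ℕ) (hn : 3 ≤ n) : delta (n+1) (n+1) < delta 1 n + 1 := by
  have hn' : (3:ℝ) ≤ n := by exact_mod_cast hn
  rw [delta_nn (n+1) (by omega), delta_eq 1 n (by omega) (by omega)]
  push_cast
  have : Real.sqrt (((n:ℝ)+1)^2 + 4) < Real.sqrt ((n:ℝ)^2 + 4*n/1) :=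
    Real.sqrt_lt_sqrt (by positivity) (by nlinarith)
  linarith

lemma glue_down (n : ℕ) (hn : 1 ≤ n) : delta 1 n < delta (n+1) (n+1) + 1 := by
  have hn' : (1:ℝ) ≤ n := by exact_mod_cast hn
  rw [delta_nn (n+1) (by omega), delta_eq 1 n le_rfl hn]
  push_cast
  have h1 : Real.sqrt ((n:ℝ)^2 + 4*n/1) < (n:ℝ) + 2 := by
    have := Real.sqrt_lt_sqrt (by positivity)
      (show (n:ℝ)^2 + 4*n/1 < ((n:ℝ)+2)^2 by nlinarith)
    rwa [Real.sqrt_sq (by linarith)] at this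
  have h2 : (n:ℝ) ≤ Real.sqrt (((n:ℝ)+1)^2 + 4) := my_le_sqrt (by linarith) (by nlinarith)
  linarith

lemma cover (n : ℕ) (hn : 1 ≤ n) : ∀ k, 1 ≤ k → k ≤ n → ∀ x : ℝ,
    delta k n ≤ x → x ≤ delta 1 n + 1 →
    ∃ a, 1 ≤ a ∧ a ≤ k ∧ delta a n ≤ x ∧ x ≤ delta a n + 1 := by
  intro k
  induction k with
  | zero => omega
  | succ k ih =>
    intro hk1 hkn x hx1 hx2
    rcases Nat.lt_or_ge k 1 with h | h
    · have : k = 0 := by omega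
      subst this
      exact ⟨1, le_rfl, le_rfl, hx1, hx2⟩
    · by_cases hle : delta k n ≤ x
      · obtain ⟨a, h1, h2, h3, h4⟩ := ih h (by omega) x hle hx2
        exact ⟨a, h1, by omega, h3, h4⟩
      · push_neg at hle
        refine ⟨k+1, by omega, le_rfl, hx1, ?_⟩
        have := delta_gap k n h hn
        linarith

lemma chain : ∀ n : ℕ, 3 ≤ n → ∀ x : ℝ, 3 + Real.sqrt 13 ≤ x →
    x ≤ delta 1 n + 1 →
    ∃ m a, 1 ≤ m ∧ 1 ≤ a ∧ a ≤ m ∧ delta a m ≤ x ∧ x ≤ delta a m + 1 := by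
  intro n
  induction n with
  | zero => omega
  | succ n ih =>
    intro hn x hx1 hx2
    rcases Nat.lt_or_ge n 3 with h | h
    · have hn3 : n = 2 := by omega
      subst hn3
      obtain ⟨a, h1, h2, h3, h4⟩ := cover 3 (by norm_num) 3 (by norm_num) le_rfl x
        (by rw [delta33]; exact hx1) hx2
      exact ⟨3, a, by norm_num, h1, h2, h3, h4⟩
    · by_cases hle : x ≤ delta 1 n + 1
      · exact ih h x hx1 hle
      · push_neg at hle
        have h1 : delta (n+1) (n+1) ≤ x := le_of_lt (lt_of_lt_of_le (glue_up n h) hle.le)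
        obtain ⟨a, h2, h3, h4, h5⟩ := cover (n+1) (by omega) (n+1) (by omega) le_rfl x h1 hx2
        exact ⟨n+1, a, by omega, h2, h3, h4, h5⟩

lemma sqrt3_lt : 2 * Real.sqrt 3 ≤ 1 + 2 * Real.sqrt 2 := by
  have h3 : Real.sqrt 3 ≤ 1.74 := my_sqrt_le (by norm_num) (by norm_num)
  have h2 : (1.41:ℝ) ≤ Real.sqrt 2 := my_le_sqrt (by norm_num) (by norm_num)
  linarith

lemma dnn_ge (n : ℕ) (hn : 3 ≤ n) : 3 + Real.sqrt 13 ≤ delta n n := by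
  have hn' : (3:ℝ) ≤ n := by exact_mod_cast hn
  rw [delta_nn n (by omega)]
  have : Real.sqrt 13 ≤ Real.sqrt ((n:ℝ)^2 + 4) := Real.sqrt_le_sqrt (by nlinarith)
  linarith

theorem stmt19 :
    (⋃ (n : ℕ) (_ : 1 ≤ n) (a : ℕ) (_ : 1 ≤ a) (_ : a ≤ n),
        Icc (delta a n) (delta a n + 1)) =
      Icc (1 + Real.sqrt 5) (2 + Real.sqrt 5) ∪
        Icc (2 + 2 * Real.sqrt 2) (3 + 2 * Real.sqrt 3) ∪
        Ici (3 + Real.sqrt 13) ∧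
    (∀ n : ℕ, 2 ≤ n → ∀ a : ℕ, 1 ≤ a → a < n →
      0 ≤ delta a n - delta (a + 1) n ∧ delta a n - delta (a + 1) n ≤ 1) ∧
    (∀ n : ℕ, 3 ≤ n → |delta (n + 1) (n + 1) - delta 1 n| < 1) := by
  refine ⟨?_, ?_, ?_⟩
  · ext x
    simp only [mem_iUnion, mem_union, mem_Icc, mem_Ici]
    constructor
    · rintro ⟨n, hn, a, ha, han, hx1, hx2⟩
      rcases Nat.lt_or_ge n 3 with h | h
      · interval_cases n
        · interval_cases a
          left; left
          rw [delta11] at hx1 hx2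
          exact ⟨hx1, by linarith⟩
        · interval_cases a
          · left; right
            rw [delta12] at hx1 hx2
            have h2 : Real.sqrt 2 ≤ Real.sqrt 3 := Real.sqrt_le_sqrt (by norm_num)
            exact ⟨by linarith, by linarith⟩
          · left; right
            rw [delta22] at hx1 hx2
            have h2 : Real.sqrt 2 ≤ Real.sqrt 3 := Real.sqrt_le_sqrt (by norm_num)
            exact ⟨by linarith, by linarith⟩
      · right
        have h1 := delta_anti n ha han hn
        have h2 := dnn_ge n h
        linarith
    · rintro ((⟨h1, h2⟩ | ⟨h1, h2⟩) | h)
      · refine ⟨1, le_rfl, 1, le_rfl, le_rfl, ?_, ?_⟩ <;> rw [delta11] <;> linarith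
      · by_cases hc : x ≤ 3 + 2 * Real.sqrt 2
        · refine ⟨2, by norm_num, 2, by norm_num, le_rfl, ?_, ?_⟩ <;>
            rw [delta22] <;> linarith
        · push_neg at hc
          have := sqrt3_lt
          refine ⟨2, by norm_num, 1, le_rfl, by norm_num, ?_, ?_⟩ <;>
            rw [delta12] <;> linarith
      · obtain ⟨N, hN⟩ := exists_nat_ge x
        have hd : x ≤ delta 1 (max N 3) + 1 := by
          have h1 : (N:ℝ) ≤ ((max N 3 : ℕ) : ℝ) := by exact_mod_cast Nat.le_max_left N 3
          have h2 := delta_ge 1 (max N 3)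
          linarith
        obtain ⟨m, a, hm, ha1, ha2, hx1, hx2⟩ :=
          chain (max N 3) (Nat.le_max_right N 3) x h hd
        exact ⟨m, hm, a, ha1, ha2, hx1, hx2⟩
  · intro n hn a ha han
    constructor
    · have := delta_anti n ha (by omega : a ≤ a + 1) (by omega)
      linarith
    · have := delta_gap a n ha (by omega)
      linarith
  · intro n hn
    rw [abs_lt]
    constructor
    · have := glue_down n (by omega)
      linarith
    · have := glue_up n hn
      linarith
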